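/- Let $\mathcal{T}_k$ denote the perfect binary tree of height $k$ (a rooted tree in which the root has degree 1, every leaf has height exactly $k$, and every internal non-root vertex has exactly 2 children), viewed as a metric graph with unit-length edges. Define $u(k)$ to be the smallest natural number such that for every continuous function $f \colon \mathcal{T}_k \to \mathbb{R}$ there exists some $x \in \mathbb{R}$ such that $f$ attains the value $x$ on at least $u(k)$ distinct edges of $\mathcal{T}_k$. Then $u(k+2) \geq u(k) + 1$ for all $k \geq 1$. -/

import Mathlib

noncomputable section

/-- Edges of the perfect binary tree `𝒯 k` of height `k`: an edge is indexed by the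
binary string recording the branching choices above it.  The empty string is the stem
edge at the root (which therefore has degree one); strings of length `d` index the
`2^d` edges at depth `d`. -/
abbrev PBTEdge (k : ℕ) : Type := {l : List Bool // l.length < k}

/-- The gluing relation on `(edge, parameter)` pairs: the endpoint `t = 1` of an edge
`l` is identified with the endpoint `t = 0` of each of its two child edges `l ++ [b]`. -/
def PBTRel (k : ℕ) (p q : PBTEdge k × unitInterval) : Prop :=
  ∃ b : Bool, q.1.1 = p.1.1 ++ [b] ∧ p.2 = 1 ∧ q.2 = 0

/-- The perfect binary tree of height `k` as a topological space (the metric graph with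
unit edges): the disjoint union of the closed unit edges with endpoints glued. -/
abbrev PBT (k : ℕ) : Type := Quot (PBTRel k)

/-- The point of `𝒯 k` at parameter `t` along edge `e`. -/
def PBT.pt {k : ℕ} (e : PBTEdge k) (t : unitInterval) : PBT k := Quot.mk _ (e, t)

/-- `f` attains the value `x` on the (closed) edge `e` of `𝒯 k`. -/
def AttainsOn {k : ℕ} (f : PBT k → ℝ) (e : PBTEdge k) (x : ℝ) : Prop :=
  ∃ t : unitInterval, f (PBT.pt e t) = x

/-- `f` attains some single value `x` on at least `n` distinct edges of `𝒯 k`. -/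
def AttainsAtLeast {k : ℕ} (f : PBT k → ℝ) (n : ℕ) : Prop :=
  ∃ x : ℝ, ∃ s : Finset (PBTEdge k), n ≤ s.card ∧ ∀ e ∈ s, AttainsOn f e x

/-- `u k` is the largest number `n` (the paper's "smallest natural number" bounding the
guarantee) such that every continuous real-valued function on `𝒯 k` attains some value
on at least `n` distinct edges. -/
def uPBT (k : ℕ) : ℕ :=
  sSup {n : ℕ | ∀ f : PBT k → ℝ, Continuous f → AttainsAtLeast f n}


namespace PBTAux

variable {m : ℕ}

instance : Fintype (PBTEdge m) :=
  Fintype.ofInjective (fun e : PBTEdge m => (fun i : Fin m => e.1[(i : ℕ)]?)) (by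
    intro a b h
    apply Subtype.ext
    apply List.ext_getElem?
    intro n
    by_cases hn : n < m
    · exact congrFun h ⟨n, hn⟩
    · rw [List.getElem?_eq_none_iff.mpr, List.getElem?_eq_none_iff.mpr] <;> omega)

/-- the top endpoint of an edge (`none` = the root vertex). -/
def top (e : PBTEdge m) : Option (PBTEdge m) :=
  if h : e.1 = [] then none
  else some ⟨e.1.dropLast, by have := e.2; rw [List.length_dropLast]; omega⟩

/-- vertices as points of the tree -/
def vpos (hm : 0 < m) : Option (PBTEdge m) → PBT m
  | none => PBT.pt ⟨[], hm⟩ 0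
  | some e => PBT.pt e 1

lemma pt_zero (hm : 0 < m) (e : PBTEdge m) : PBT.pt e 0 = vpos hm (top e) := by
  rcases e with ⟨l, hl⟩
  by_cases h : l = []
  · subst h; rfl
  · have h2 : top ⟨l, hl⟩ = some ⟨l.dropLast, by rw [List.length_dropLast]; omega⟩ := by
      simp [top, h]
    rw [h2]
    exact (Quot.sound ⟨l.getLast h, by simp [List.dropLast_append_getLast h]⟩).symm

lemma attainsOn_of_mem_uIcc (hm : 0 < m) {f : PBT m → ℝ} (hf : Continuous f) (e : PBTEdge m)
    {t : ℝ} (ht : t ∈ Set.uIcc (f (vpos hm (top e))) (f (vpos hm (some e)))) :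
    AttainsOn f e t := by
  set F : ℝ → ℝ := fun s : ℝ => f (PBT.pt e (Set.projIcc 0 1 zero_le_one s)) with hF
  have hc : Continuous F := by
    apply hf.comp
    exact (continuous_quot_mk.comp (Continuous.prodMk_right e)).comp continuous_projIcc
  have h0 : F 0 = f (vpos hm (top e)) := by
    have h2 : Set.projIcc (0:ℝ) 1 zero_le_one 0 = (0 : unitInterval) := by
      simp [Set.projIcc]
    rw [hF]; dsimp only; rw [h2, pt_zero hm e]
  have h1 : F 1 = f (vpos hm (some e)) := by
    have h2 : Set.projIcc (0:ℝ) 1 zero_le_one 1 = (1 : unitInterval) := by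
      simp [Set.projIcc]
    rw [hF]; dsimp only; rw [h2]; rfl
  have h3 := intermediate_value_uIcc (f := F) (a := 0) (b := 1) hc.continuousOn
  rw [h0, h1] at h3
  obtain ⟨s, -, hs⟩ := h3 ht
  exact ⟨_, hs⟩

/-- piecewise linear function from vertex labels -/
def pl (x : Option (PBTEdge m) → ℝ) : PBT m → ℝ :=
  Quot.lift (fun p : PBTEdge m × unitInterval =>
      (1 - (p.2 : ℝ)) * x (top p.1) + (p.2 : ℝ) * x (some p.1)) (by
    rintro ⟨a, s⟩ ⟨b, u⟩ ⟨c, hq, hp1, hq0⟩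
    simp only at hq hp1 hq0
    subst hp1; subst hq0
    have hb : top b = some a := by
      rcases b with ⟨lb, hlb⟩
      simp only at hq
      subst hq
      simp [top, List.dropLast_concat]
    simp only [hb, Set.Icc.coe_one, Set.Icc.coe_zero]; ring)

lemma pl_apply (x : Option (PBTEdge m) → ℝ) (e : PBTEdge m) (s : unitInterval) :
    pl x (PBT.pt e s) = (1 - (s : ℝ)) * x (top e) + (s : ℝ) * x (some e) := rfl

lemma pl_continuous (x : Option (PBTEdge m) → ℝ) : Continuous (pl x) := by
  apply continuous_quot_lift
  apply Continuous.add
  · exact (continuous_const.sub (continuous_subtype_val.comp continuous_snd)).mul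
      ((continuous_of_discreteTopology (f := fun e : PBTEdge m => x (top e))).comp continuous_fst)
  · exact (continuous_subtype_val.comp continuous_snd).mul
      ((continuous_of_discreteTopology (f := fun e : PBTEdge m => x (some e))).comp continuous_fst)

lemma attainsOn_pl {x : Option (PBTEdge m) → ℝ} {t : ℝ} {e : PBTEdge m}
    (h : AttainsOn (pl x) e t) : t ∈ Set.uIcc (x (top e)) (x (some e)) := by
  obtain ⟨s, hs⟩ := h
  rw [pl_apply] at hs
  have h0 : (0:ℝ) ≤ s := s.2.1
  have h1 : (s:ℝ) ≤ 1 := s.2.2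
  rw [Set.mem_uIcc]
  rcases le_total (x (top e)) (x (some e)) with hc | hc
  · left; constructor <;> nlinarith
  · right; constructor <;> nlinarith

/-- a strictly `y`-monotone injective rank function on any finite type -/
lemma exists_rank {V : Type} [Fintype V] (y : V → ℝ) :
    ∃ ρ : V → ℝ, Function.Injective ρ ∧ ∀ u v : V, ρ u ≤ ρ v → y u ≤ y v := by
  classical
  obtain ⟨ι, hι⟩ : ∃ ι : V → ℕ, Function.Injective ι :=
    ⟨fun v => (Fintype.equivFin V v : ℕ), fun a b h => (Fintype.equivFin V).injective (Fin.ext h)⟩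
  set le : V → V → Prop := fun u v => y u < y v ∨ (y u = y v ∧ ι u ≤ ι v) with hle
  have le_refl : ∀ v, le v v := fun v => Or.inr ⟨rfl, le_rfl⟩
  have le_trans : ∀ u v w, le u v → le v w → le u w := by
    intro u v w h1 h2
    rcases h1 with h1 | ⟨e1, i1⟩ <;> rcases h2 with h2 | ⟨e2, i2⟩
    · exact Or.inl (h1.trans h2)
    · exact Or.inl (e2 ▸ h1)
    · exact Or.inl (by rw [e1]; exact h2)
    · exact Or.inr ⟨e1.trans e2, i1.trans i2⟩
  set ρ : V → ℝ := fun v => ((Finset.univ.filter (fun u => le u v)).card : ℝ) with hρ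
  have strict : ∀ u v, le u v → u ≠ v → ρ u < ρ v := by
    intro u v h hne
    have hss : (Finset.univ.filter (fun z => le z u)) ⊂ (Finset.univ.filter (fun z => le z v)) := by
      constructor
      · intro z hz
        simp only [Finset.mem_filter, Finset.mem_univ, true_and] at *
        exact le_trans _ _ _ hz h
      · intro hsub
        have hv : v ∈ Finset.univ.filter (fun z => le z v) := by
          simp [le_refl v]
        have hvu := hsub hv
        simp only [Finset.mem_filter, Finset.mem_univ, true_and] at hvu
        rcases hvu with h2 | ⟨e2, i2⟩ <;> rcases h with h1 | ⟨e1, i1⟩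
        · exact absurd (h1.trans h2) (lt_irrefl _)
        · exact absurd h2 (by rw [e1]; exact lt_irrefl _)
        · exact absurd h1 (by rw [e2]; exact lt_irrefl _)
        · exact (hne (hι (le_antisymm i1 i2))).elim
    simp only [hρ]
    exact_mod_cast Finset.card_lt_card hss
  refine ⟨ρ, ?_, ?_⟩
  · intro u v h
    by_contra hne
    rcases lt_trichotomy (y u) (y v) with h1 | h1 | h1
    · exact absurd h (ne_of_lt (strict u v (Or.inl h1) hne))
    · rcases le_total (ι u) (ι v) with h2 | h2
      · exact absurd h (ne_of_lt (strict u v (Or.inr ⟨h1, h2⟩) hne))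
      · exact absurd h.symm (ne_of_lt (strict v u (Or.inr ⟨h1.symm, h2⟩) (Ne.symm hne)))
    · exact absurd h.symm (ne_of_lt (strict v u (Or.inl h1) (Ne.symm hne)))
  · intro u v h
    by_contra hy
    push_neg at hy
    have := strict v u (Or.inl hy) (by rintro rfl; exact lt_irrefl _ hy)
    linarith

variable (ρ : Option (PBTEdge m) → ℝ)

/-- edge `e` "covers" vertex `w` in the rank order -/
def cov (w : Option (PBTEdge m)) (e : PBTEdge m) : Prop :=
  (ρ (top e) ≤ ρ w ∧ ρ w ≤ ρ (some e)) ∨ (ρ (some e) ≤ ρ w ∧ ρ w ≤ ρ (top e))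

lemma chain_up (w : Option (PBTEdge m)) (i j : Bool) :
    ∀ (L : List Bool) (hL : L.length < m), ¬ [i,j] <+: L →
      ρ (some ⟨L, hL⟩) ≤ ρ w →
      ρ none ≤ ρ w ∨ ∃ e : PBTEdge m, ¬ [i,j] <+: e.1 ∧ cov ρ w e := by
  intro L
  induction L using List.reverseRecOn with
  | nil =>
    intro hL hnp hle
    rcases le_total (ρ none) (ρ w) with h | h
    · exact Or.inl h
    · refine Or.inr ⟨⟨[], hL⟩, hnp, Or.inr ⟨hle, ?_⟩⟩
      have ht : top (⟨[], hL⟩ : PBTEdge m) = none := by simp [top]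
      rw [ht]; exact h
  | append_singleton L b ih =>
    intro hL hnp hle
    have hL' : L.length < m := by
      have := hL; simp only [List.length_append, List.length_singleton] at this; omega
    have hnp' : ¬ [i,j] <+: L := fun h => hnp (h.trans (List.prefix_append L [b]))
    have htop : top (⟨L ++ [b], hL⟩ : PBTEdge m) = some ⟨L, hL'⟩ := by
      simp [top, List.dropLast_concat]
    rcases le_total (ρ (some ⟨L, hL'⟩)) (ρ w) with h | h
    · exact ih hL' hnp' h
    · exact Or.inr ⟨⟨L ++ [b], hL⟩, hnp, Or.inr ⟨hle, by rw [htop]; exact h⟩⟩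

lemma chain_down (w : Option (PBTEdge m)) (i j : Bool) :
    ∀ (L : List Bool) (hL : L.length < m), ¬ [i,j] <+: L →
      ρ w ≤ ρ (some ⟨L, hL⟩) →
      ρ w ≤ ρ none ∨ ∃ e : PBTEdge m, ¬ [i,j] <+: e.1 ∧ cov ρ w e := by
  intro L
  induction L using List.reverseRecOn with
  | nil =>
    intro hL hnp hle
    rcases le_total (ρ w) (ρ none) with h | h
    · exact Or.inl h
    · refine Or.inr ⟨⟨[], hL⟩, hnp, Or.inl ⟨?_, hle⟩⟩
      have ht : top (⟨[], hL⟩ : PBTEdge m) = none := by simp [top]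
      rw [ht]; exact h
  | append_singleton L b ih =>
    intro hL hnp hle
    have hL' : L.length < m := by
      have := hL; simp only [List.length_append, List.length_singleton] at this; omega
    have hnp' : ¬ [i,j] <+: L := fun h => hnp (h.trans (List.prefix_append L [b]))
    have htop : top (⟨L ++ [b], hL⟩ : PBTEdge m) = some ⟨L, hL'⟩ := by
      simp [top, List.dropLast_concat]
    rcases le_total (ρ w) (ρ (some ⟨L, hL'⟩)) with h | h
    · exact ih hL' hnp' h
    · exact Or.inr ⟨⟨L ++ [b], hL⟩, hnp, Or.inl ⟨by rw [htop]; exact h, hle⟩⟩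

/-- embedding of the edges of `𝒯 k` into `𝒯 (k+2)` as the copy below prefix `[i,j]` -/
def φE (i j : Bool) {k : ℕ} (e : PBTEdge k) : PBTEdge (k+2) :=
  ⟨i :: j :: e.1, by have := e.2; simp only [List.length_cons]; omega⟩

lemma φE_inj (i j : Bool) {k : ℕ} : Function.Injective (φE i j (k := k)) := by
  intro a b h
  apply Subtype.ext
  have h2 := congrArg Subtype.val h
  simpa [φE] using h2

/-- embedding of the vertices of `𝒯 k` into `𝒯 (k+2)` -/
def φV (i j : Bool) {k : ℕ} : Option (PBTEdge k) → Option (PBTEdge (k+2))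
  | none => some ⟨[i], by simp⟩
  | some e => some (φE i j e)

lemma top_φE (i j : Bool) {k : ℕ} (e : PBTEdge k) :
    top (φE i j e) = φV i j (top e) := by
  rcases e with ⟨l, hl⟩
  cases l <;> simp [top, φE, φV]

lemma bddS (m : ℕ) :
    BddAbove {n : ℕ | ∀ f : PBT m → ℝ, Continuous f → AttainsAtLeast f n} := by
  refine ⟨Fintype.card (PBTEdge m), ?_⟩
  intro n hn
  obtain ⟨x, s, hc, -⟩ := hn (fun _ => 0) continuous_const
  exact hc.trans (Finset.card_le_univ s)

lemma uPBT_spec (m : ℕ) : ∀ f : PBT m → ℝ, Continuous f → AttainsAtLeast f (uPBT m) := by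
  have h0 : (0:ℕ) ∈ {n : ℕ | ∀ f : PBT m → ℝ, Continuous f → AttainsAtLeast f n} :=
    fun f _ => ⟨0, ∅, by simp, fun e he => by simp at he⟩
  exact Nat.sSup_mem ⟨0, h0⟩ (bddS m)

end PBTAux

open PBTAux

/-- `u (k + 2) ≥ u k + 1` for all `k ≥ 1`. -/
theorem uPBT_add_two (k : ℕ) (hk : 1 ≤ k) : uPBT k + 1 ≤ uPBT (k + 2) := by
  classical
  have hmem : uPBT k + 1 ∈
      {n : ℕ | ∀ f : PBT (k+2) → ℝ, Continuous f → AttainsAtLeast f n} := by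
    intro f hf
    rcases Nat.eq_zero_or_pos (uPBT k) with h0 | hpos
    · rw [h0]
      refine ⟨f (PBT.pt ⟨[], by simp only [List.length_nil]; omega⟩ 0), {⟨[], by simp only [List.length_nil]; omega⟩}, by simp, ?_⟩
      intro e he
      rw [Finset.mem_singleton] at he
      subst he
      exact ⟨0, rfl⟩
    · have hm2 : 0 < k + 2 := by omega
      obtain ⟨ρ, ρinj, ρy⟩ := exists_rank (fun v : Option (PBTEdge (k+2)) => f (vpos hm2 v))
      obtain ⟨α, -, hα⟩ := Finset.exists_min_image
        (Finset.univ : Finset (Option (PBTEdge (k+2)))) ρ ⟨none, Finset.mem_univ _⟩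
      obtain ⟨β, -, hβ⟩ := Finset.exists_max_image
        (Finset.univ : Finset (Option (PBTEdge (k+2)))) ρ ⟨none, Finset.mem_univ _⟩
      obtain ⟨i, j, hαR, hβR⟩ : ∃ i j : Bool,
          ¬ [i,j] <+: (α.elim [] Subtype.val) ∧ ¬ [i,j] <+: (β.elim [] Subtype.val) := by
        refine ⟨!(α.elim [] Subtype.val).headI, !((β.elim [] Subtype.val).getD 1 false), ?_, ?_⟩
        · rintro ⟨r, hr⟩
          have h2 := congrArg List.headI hr
          simp at h2
        · rintro ⟨r, hr⟩
          have h2 := congrArg (fun l : List Bool => l.getD 1 false) hr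
          simp at h2
      obtain ⟨t, s₀, hcard, hatt⟩ :=
        uPBT_spec k (pl (fun v => ρ (φV i j v))) (pl_continuous _)
      have hWne : (Finset.univ.filter (fun v : Option (PBTEdge (k+2)) => ρ v ≤ t)).Nonempty := by
        obtain ⟨e₁, he₁⟩ := Finset.card_pos.mp (lt_of_lt_of_le hpos hcard)
        have h2 := attainsOn_pl (hatt e₁ he₁)
        rw [Set.mem_uIcc] at h2
        rcases h2 with ⟨h2, -⟩ | ⟨h2, -⟩
        · exact ⟨φV i j (top e₁), Finset.mem_filter.mpr ⟨Finset.mem_univ _, h2⟩⟩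
        · exact ⟨φV i j (some e₁), Finset.mem_filter.mpr ⟨Finset.mem_univ _, h2⟩⟩
      obtain ⟨w, hwW, hwmax⟩ := Finset.exists_max_image _ ρ hWne
      have hwt : ρ w ≤ t := (Finset.mem_filter.mp hwW).2
      have key1 : ∀ v, ρ v ≤ t → ρ v ≤ ρ w := fun v hv =>
        hwmax v (Finset.mem_filter.mpr ⟨Finset.mem_univ _, hv⟩)
      have key2 : ∀ v, t ≤ ρ v → ρ w ≤ ρ v := fun v hv => hwt.trans hv
      have hcov_att : ∀ e : PBTEdge (k+2), cov ρ w e → AttainsOn f e (f (vpos hm2 w)) := by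
        intro e hc
        apply attainsOn_of_mem_uIcc hm2 hf
        rw [Set.mem_uIcc]
        rcases hc with ⟨h1, h2⟩ | ⟨h1, h2⟩
        · exact Or.inl ⟨ρy _ _ h1, ρy _ _ h2⟩
        · exact Or.inr ⟨ρy _ _ h1, ρy _ _ h2⟩
      have hse : ∀ e ∈ s₀, cov ρ w (φE i j e) := by
        intro e he
        have h2 := attainsOn_pl (hatt e he)
        rw [Set.mem_uIcc] at h2
        unfold cov
        rw [top_φE i j e]
        rcases h2 with ⟨h1, h2⟩ | ⟨h1, h2⟩
        · exact Or.inl ⟨key1 _ h1, key2 _ h2⟩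
        · exact Or.inr ⟨key1 _ h1, key2 _ h2⟩
      have hup : ρ none ≤ ρ w ∨ ∃ e : PBTEdge (k+2), ¬ [i,j] <+: e.1 ∧ cov ρ w e := by
        cases α with
        | none => exact Or.inl (hα w (Finset.mem_univ w))
        | some a => exact chain_up ρ w i j a.1 a.2 hαR (hα w (Finset.mem_univ w))
      have hdown : ρ w ≤ ρ none ∨ ∃ e : PBTEdge (k+2), ¬ [i,j] <+: e.1 ∧ cov ρ w e := by
        cases β with
        | none => exact Or.inl (hβ w (Finset.mem_univ w))
        | some b => exact chain_down ρ w i j b.1 b.2 hβR (hβ w (Finset.mem_univ w))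
      have hstar : ∃ e : PBTEdge (k+2), ¬ [i,j] <+: e.1 ∧ cov ρ w e := by
        rcases hup with h1 | h
        · rcases hdown with h2 | h
          · have hw : ρ w = ρ none := le_antisymm h2 h1
            refine ⟨⟨[], by simp only [List.length_nil]; omega⟩, ?_, ?_⟩
            · rintro ⟨r, hr⟩
              simp at hr
            · have ht : top (⟨[], by simp only [List.length_nil]; omega⟩ : PBTEdge (k+2)) = none := by simp [top]
              rcases le_total (ρ (some (⟨[], by simp only [List.length_nil]; omega⟩ : PBTEdge (k+2)))) (ρ w) with h3 | h3
              · exact Or.inr ⟨h3, by rw [ht, ← hw]⟩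
              · exact Or.inl ⟨by rw [ht, ← hw], h3⟩
          · exact h
        · exact h
      obtain ⟨es, hesP, hescov⟩ := hstar
      refine ⟨f (vpos hm2 w), insert es (s₀.image (φE i j)), ?_, ?_⟩
      · have hni : es ∉ s₀.image (φE i j) := by
          intro hmem2
          obtain ⟨e, -, he⟩ := Finset.mem_image.mp hmem2
          exact hesP (by rw [← he]; exact ⟨e.1, rfl⟩)
        rw [Finset.card_insert_of_notMem hni, Finset.card_image_of_injective _ (φE_inj i j)]
        omega
      · intro e he
        rcases Finset.mem_insert.mp he with rfl | he
        · exact hcov_att _ hescov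
        · obtain ⟨e', he', rfl⟩ := Finset.mem_image.mp he
          exact hcov_att _ (hse e' he')
  exact le_csSup (bddS (k+2)) hmem


end
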